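/- For every n ≥ 1, the first Cantor–Bendixson derivative of R * A_n equals R * A_{n−1}: (R * A_n)^{(1)} = R * A_{n−1}. Consequently (R * A_n)^{(n)} = {0} (the zero function). -/

import Mathlib

open Filter Topology

/-- The derived set (set of accumulation points) of `A`. -/
def derivSet {α : Type*} [TopologicalSpace α] (A : Set α) : Set α :=
  {x | AccPt x (𝓟 A)}

/-- `R * 𝒜_n`: functions with values in `R` and support of cardinality at most `n`,
as a subset of `R^ℕ` (here realized inside `ℕ → ℝ` with the product topology). -/
def RA (R : Set ℝ) (n : ℕ) : Set (ℕ → ℝ) :=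
  {f | (∀ i, f i ∈ R) ∧ ∃ F : Finset ℕ, F.card ≤ n ∧ ∀ i, f i ≠ 0 → i ∈ F}

lemma accPt_iff_closure' {α : Type*} [TopologicalSpace α] (A : Set α) (x : α) :
    AccPt x (𝓟 A) ↔ x ∈ closure (A \ {x}) := by
  rw [accPt_principal_iff_clusterPt, mem_closure_iff_clusterPt]

lemma key_lemma (R : Set ℝ) (hcomp : IsCompact R) (h0 : (0 : ℝ) ∈ R)
    (hacc : ∀ x : ℝ, AccPt x (𝓟 R) ↔ x = 0) (m : ℕ) (hm : 1 ≤ m) :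
    derivSet (RA R m) = RA R (m - 1) := by
  ext f
  simp only [derivSet, Set.mem_setOf_eq, accPt_iff_closure']
  constructor
  · intro hf
    have hval : ∀ i, f i ∈ R := by
      intro i
      have h1 : f i ∈ closure R := by
        exact map_mem_closure (f := fun g : ℕ → ℝ => g i) (continuous_apply i) hf
          (fun g hg => hg.1.1 i)
      rwa [hcomp.isClosed.closure_eq] at h1
    have hiso : ∀ i : ℕ, ∃ ε : ℝ, 0 < ε ∧
        ∀ y ∈ R, dist y (f i) < ε → f i ≠ 0 → y = f i := by
      intro i
      by_cases hfi : f i = 0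
      · exact ⟨1, one_pos, fun y _ _ h => absurd hfi h⟩
      · have hna : ¬ AccPt (f i) (𝓟 R) := by rw [hacc]; exact hfi
        rw [accPt_iff_nhds] at hna
        push_neg at hna
        obtain ⟨U, hU, hU2⟩ := hna
        obtain ⟨ε, hε, hball⟩ := Metric.mem_nhds_iff.mp hU
        refine ⟨ε, hε, fun y hy hdy _ => ?_⟩
        exact hU2 y ⟨hball (Metric.mem_ball.mpr hdy), hy⟩
    choose ε hε hεspec using hiso
    have hmain : ∀ T : Finset ℕ, (∀ i ∈ T, f i ≠ 0) →
        ∃ g, g ∈ RA R m ∧ g ≠ f ∧ ∀ i ∈ T, g i = f i := by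
      intro T hT
      have hU : {g : ℕ → ℝ | ∀ i ∈ T, dist (g i) (f i) < ε i} ∈ 𝓝 f := by
        have heq : {g : ℕ → ℝ | ∀ i ∈ T, dist (g i) (f i) < ε i}
            = ⋂ i ∈ T, (fun g : ℕ → ℝ => g i) ⁻¹' Metric.ball (f i) (ε i) := by
          ext g; simp [Metric.mem_ball]
        rw [heq]
        refine (Filter.biInter_mem T.finite_toSet).mpr fun i _ => ?_
        exact (continuous_apply i).continuousAt
          (Metric.isOpen_ball.mem_nhds (Metric.mem_ball_self (hε i)))
      obtain ⟨g, hgU, hgA, hgne⟩ := mem_closure_iff_nhds.mp hf _ hU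
      refine ⟨g, hgA, hgne, fun i hi => ?_⟩
      exact hεspec i (g i) (hgA.1 i) (hgU i hi) (hT i hi)
    -- Step A: any finset on which f is nonzero has card ≤ m
    have hstepA : ∀ T : Finset ℕ, (∀ i ∈ T, f i ≠ 0) → T.card ≤ m := by
      intro T hT
      obtain ⟨g, ⟨hgval, F, hFcard, hFsupp⟩, hgne, hgT⟩ := hmain T hT
      calc T.card ≤ F.card := Finset.card_le_card (fun i hi =>
            hFsupp i (by rw [hgT i hi]; exact hT i hi))
        _ ≤ m := hFcard
    -- support of f is finite
    have hSfin : {i | f i ≠ 0}.Finite := by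
      by_contra hinf
      obtain ⟨T, hTsub, hTcard⟩ :=
        Set.Infinite.exists_subset_card_eq hinf (m + 1)
      have := hstepA T (fun i hi => hTsub hi)
      omega
    set F : Finset ℕ := hSfin.toFinset with hFdef
    have hFmem : ∀ i, f i ≠ 0 ↔ i ∈ F := by
      intro i; simp [hFdef, Set.Finite.mem_toFinset]
    have hFle : F.card ≤ m := hstepA F (fun i hi => (hFmem i).mpr hi)
    -- Step B: card F ≠ m
    have hFne : F.card ≠ m := by
      intro hcardm
      obtain ⟨g, ⟨hgval, G, hGcard, hGsupp⟩, hgne, hgF⟩ :=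
        hmain F (fun i hi => (hFmem i).mpr hi)
      have hFG : F ⊆ G := fun i hi => hGsupp i (by rw [hgF i hi]; exact (hFmem i).mpr hi)
      have hGF : G = F := (Finset.eq_of_subset_of_card_le hFG (by omega)).symm
      apply hgne
      funext i
      by_cases hi : i ∈ F
      · exact hgF i hi
      · have h1 : f i = 0 := by by_contra h; exact hi ((hFmem i).mp h)
        have h2 : g i = 0 := by
          by_contra h
          exact hi (hGF ▸ hGsupp i h)
        rw [h1, h2]
    exact ⟨hval, F, by omega, fun i hfi => (hFmem i).mp hfi⟩
  · rintro ⟨hval, F, hFcard, hFsupp⟩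
    rw [mem_closure_iff_nhds]
    intro U hU
    obtain ⟨i, hi⟩ := Infinite.exists_notMem_finset F
    have hfi : f i = 0 := by by_contra h; exact hi (hFsupp i h)
    have hφ : Continuous (fun y : ℝ => Function.update f i y) :=
      continuous_const.update i continuous_id
    have hφ0 : Function.update f i (0 : ℝ) = f := by
      rw [← hfi]; exact Function.update_eq_self i f
    have hpre : (fun y : ℝ => Function.update f i y) ⁻¹' U ∈ 𝓝 (0 : ℝ) := by
      have h2 : U ∈ 𝓝 (Function.update f i 0) := by rw [hφ0]; exact hU
      exact hφ.continuousAt h2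
    obtain ⟨y, ⟨hyU, hyR⟩, hyne⟩ := (accPt_iff_nhds (x := (0 : ℝ)) (C := R)).mp ((hacc 0).mpr rfl) _ hpre
    refine ⟨Function.update f i y, hyU, ⟨⟨?_, insert i F, ?_, ?_⟩, ?_⟩⟩
    · intro j
      rw [Function.update_apply]
      split
      · exact hyR
      · exact hval j
    · calc (insert i F).card ≤ F.card + 1 := Finset.card_insert_le i F
        _ ≤ m := by omega
    · intro j hj
      rcases eq_or_ne j i with rfl | hne
      · exact Finset.mem_insert_self j F
      · rw [Function.update_of_ne hne] at hj
        exact Finset.mem_insert_of_mem (hFsupp j hj)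
    · simp only [Set.mem_singleton_iff]
      intro heq
      apply hyne
      rw [← hfi]
      calc y = Function.update f i y i := (Function.update_self i y f).symm
        _ = f i := by rw [heq]

theorem derivSet_RA (R : Set ℝ) (hc : R.Countable) (hcomp : IsCompact R)
    (hpos : R ⊆ Set.Ici 0) (h0 : (0 : ℝ) ∈ R)
    (hacc : ∀ x : ℝ, AccPt x (𝓟 R) ↔ x = 0)
    (n : ℕ) (hn : 1 ≤ n) :
    derivSet (RA R n) = RA R (n - 1) ∧ derivSet^[n] (RA R n) = {fun _ => 0} := by
  have key := key_lemma R hcomp h0 hacc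
  have h0set : RA R 0 = {fun _ => (0 : ℝ)} := by
    ext f
    constructor
    · rintro ⟨hval, F, hF, hsupp⟩
      have hFe : F = ∅ := Finset.card_eq_zero.mp (Nat.le_zero.mp hF)
      have : f = fun _ => (0 : ℝ) := by
        funext i
        by_contra h
        have := hsupp i h
        rw [hFe] at this
        exact absurd this (Finset.notMem_empty i)
      exact this
    · intro h
      rw [Set.mem_singleton_iff] at h
      subst h
      exact ⟨fun i => h0, ∅, le_refl 0, fun i hi => absurd rfl hi⟩
  have hiter : ∀ k, derivSet^[k] (RA R k) = RA R 0 := by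
    intro k
    induction k with
    | zero => rfl
    | succ k ih =>
      rw [Function.iterate_succ_apply, key (k + 1) (by omega)]
      simpa using ih
  exact ⟨key n hn, by rw [hiter n, h0set]⟩
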